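/- Let T be a maximal symmetric linear relation in a Hilbert space 𝔥 with n₊(T) = 0 (so ℂ₊ ⊆ ρ(T*) in the relation sense). Then T has a unique generalized resolvent, namely R(λ) = (T* − λ)⁻¹ for λ ∈ ℂ₊ and R(λ) = (T − λ)⁻¹ for λ ∈ ℂ₋. -/

import Mathlib

/- STATEMENT 12: a maximal symmetric relation T with n₊(T) = 0 has a unique
generalized resolvent, namely R(λ) = (T* − λ)⁻¹ on ℂ₊ and R(λ) = (T − λ)⁻¹ on ℂ₋.
Formally: every generalized resolvent (compression of the resolvent of an exit-space
self-adjoint extension T̃ of T) satisfies these formulas. -/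
open scoped ComplexInnerProductSpace

set_option synthInstance.maxHeartbeats 1000000

/-- The adjoint of a linear relation `T` in `𝔥`. -/
def adjRel {𝔥 : Type*} [NormedAddCommGroup 𝔥] [InnerProductSpace ℂ 𝔥]
    (T : Submodule ℂ (𝔥 × 𝔥)) : Submodule ℂ (𝔥 × 𝔥) where
  carrier := {p | ∀ q ∈ T, ⟪p.2, q.1⟫ = ⟪p.1, q.2⟫}
  add_mem' := by
    intro a b ha hb q hq
    show ⟪a.2 + b.2, q.1⟫ = ⟪a.1 + b.1, q.2⟫
    rw [inner_add_left, inner_add_left, ha q hq, hb q hq]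
  zero_mem' := by
    intro q hq
    show ⟪(0 : 𝔥), q.1⟫ = ⟪(0 : 𝔥), q.2⟫
    simp
  smul_mem' := by
    intro c a ha q hq
    show ⟪c • a.2, q.1⟫ = ⟪c • a.1, q.2⟫
    rw [inner_smul_left, inner_smul_left, ha q hq]

lemma mem_adjRel_iff {𝔥 : Type*} [NormedAddCommGroup 𝔥] [InnerProductSpace ℂ 𝔥]
    (T : Submodule ℂ (𝔥 × 𝔥)) (p : 𝔥 × 𝔥) :
    p ∈ adjRel T ↔ ∀ q ∈ T, ⟪p.2, q.1⟫ = ⟪p.1, q.2⟫ := Iff.rfl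

/-- Lower estimate: if `⟪g, f⟫` is real, then `|Im l| ‖f‖ ≤ ‖g - l f‖`. -/
lemma im_estimate {𝔥 : Type*} [NormedAddCommGroup 𝔥] [InnerProductSpace ℂ 𝔥]
    (l : ℂ) (f g : 𝔥) (hreal : (⟪g, f⟫).im = 0) :
    |l.im| * ‖f‖ ≤ ‖g - l • f‖ := by
  have e1 : ‖g - l • f‖ ^ 2
      = ‖g‖ ^ 2 - 2 * (l.re * (⟪g, f⟫).re) + (l.re ^ 2 + l.im ^ 2) * ‖f‖ ^ 2 := by
    rw [@norm_sub_sq ℂ, inner_smul_right, norm_smul, mul_pow]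
    have h1 : RCLike.re (l * ⟪g, f⟫) = l.re * (⟪g, f⟫).re := by
      simp [Complex.mul_re, hreal]
    have h2 : ‖l‖ ^ 2 = l.re ^ 2 + l.im ^ 2 := by
      rw [Complex.sq_norm, Complex.normSq_apply]; ring
    rw [h1, h2]
  have e2 : ‖g - (l.re : ℂ) • f‖ ^ 2
      = ‖g‖ ^ 2 - 2 * (l.re * (⟪g, f⟫).re) + l.re ^ 2 * ‖f‖ ^ 2 := by
    rw [@norm_sub_sq ℂ, inner_smul_right, norm_smul, mul_pow]
    have h1 : RCLike.re ((l.re : ℂ) * ⟪g, f⟫) = l.re * (⟪g, f⟫).re := by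
      simp [Complex.mul_re, hreal]
    have h2 : ‖(l.re : ℂ)‖ ^ 2 = l.re ^ 2 := by
      rw [Complex.sq_norm, Complex.normSq_apply]; simp; ring
    rw [h1, h2]
  have hsq : (|l.im| * ‖f‖) ^ 2 ≤ ‖g - l • f‖ ^ 2 := by
    have h0 : 0 ≤ ‖g - (l.re : ℂ) • f‖ ^ 2 := sq_nonneg _
    rw [e2] at h0
    rw [e1, mul_pow, sq_abs]
    nlinarith
  nlinarith [norm_nonneg (g - l • f), mul_nonneg (abs_nonneg l.im) (norm_nonneg f)]

theorem statement12 {𝔥 𝔥' : Type*}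
    [NormedAddCommGroup 𝔥] [InnerProductSpace ℂ 𝔥] [CompleteSpace 𝔥]
    [NormedAddCommGroup 𝔥'] [InnerProductSpace ℂ 𝔥'] [CompleteSpace 𝔥']
    (T : Submodule ℂ (𝔥 × 𝔥)) (hT : IsClosed (T : Set (𝔥 × 𝔥))) (hsym : T ≤ adjRel T)
    -- n₊(T) = 0 (hence T is maximal symmetric)
    (hdef : ∀ l : ℂ, 0 < l.im → ∀ h : 𝔥, (h, l • h) ∈ adjRel T → h = 0)
    -- an exit space self-adjoint extension T̃ of T in 𝔥̃ ⊇ 𝔥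
    (ι : 𝔥 →ₗᵢ[ℂ] 𝔥') (Ttil : Submodule ℂ (𝔥' × 𝔥')) (hsa : Ttil = adjRel Ttil)
    (hext : ∀ p ∈ T, ((ι p.1, ι p.2) : 𝔥' × 𝔥') ∈ Ttil)
    -- the corresponding generalized resolvent R(λ) = P_𝔥 (T̃ − λ)⁻¹ ↾ 𝔥
    (R : ℂ → (𝔥 →L[ℂ] 𝔥))
    (hR : ∀ l : ℂ, l.im ≠ 0 → ∀ h : 𝔥, ∃ u : 𝔥',
      (u, ι h + l • u) ∈ Ttil ∧
        R l h = ContinuousLinearMap.adjoint ι.toContinuousLinearMap u) :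
    -- R(λ) = (T* − λ)⁻¹ for λ ∈ ℂ₊ and R(λ) = (T − λ)⁻¹ for λ ∈ ℂ₋
    (∀ l : ℂ, 0 < l.im → ∀ h : 𝔥, (R l h, h + l • R l h) ∈ adjRel T) ∧
    (∀ l : ℂ, l.im < 0 → ∀ h : 𝔥, (R l h, h + l • R l h) ∈ T) := by
  have hadj : ∀ (u : 𝔥') (x : 𝔥),
      ⟪(ContinuousLinearMap.adjoint ι.toContinuousLinearMap) u, x⟫ = ⟪u, ι x⟫ := by
    intro u x
    rw [ContinuousLinearMap.adjoint_inner_left]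
    rfl
  constructor
  · -- part 1 : upper half plane
    intro l hl h
    obtain ⟨u, hu, hRu⟩ := hR l (ne_of_gt hl) h
    rw [mem_adjRel_iff]
    intro q hq
    have hq' : ((ι q.1, ι q.2) : 𝔥' × 𝔥') ∈ Ttil := hext q hq
    rw [hsa] at hu
    have key := hu _ hq'
    simp only [inner_add_left, inner_smul_left] at key ⊢
    rw [ι.inner_map_map] at key
    rw [hRu]
    simp only [hadj]
    linear_combination key
  · -- part 2 : lower half plane
    intro l hl h
    have hlne : l.im ≠ 0 := ne_of_lt hl
    -- the image submodule S = ran (T - l)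
    let A : (𝔥 × 𝔥) →L[ℂ] 𝔥 :=
      ContinuousLinearMap.snd ℂ 𝔥 𝔥 - l • ContinuousLinearMap.fst ℂ 𝔥 𝔥
    have hA : ∀ p : 𝔥 × 𝔥, A p = p.2 - l • p.1 := fun p => rfl
    set S : Submodule ℂ 𝔥 := T.map (A : (𝔥 × 𝔥) →ₗ[ℂ] 𝔥) with hS
    -- reality of inner products on T
    have hrealT : ∀ p ∈ T, (⟪p.2, p.1⟫ : ℂ).im = 0 := by
      intro p hp
      have h1 : ⟪p.2, p.1⟫ = ⟪p.1, p.2⟫ := hsym hp p hp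
      have h2 : (starRingEnd ℂ) ⟪p.2, p.1⟫ = ⟪p.2, p.1⟫ := by
        rw [inner_conj_symm, h1]
      exact Complex.conj_eq_iff_im.mp h2
    -- the estimate on T
    have hest : ∀ p ∈ T, |l.im| * ‖p.1‖ ≤ ‖A p‖ := by
      intro p hp
      rw [hA]
      exact im_estimate l p.1 p.2 (hrealT p hp)
    have him : 0 < |l.im| := abs_pos.mpr hlne
    -- S is closed
    haveI : CompleteSpace T := hT.completeSpace_coe
    set c : ℝ := |l.im|⁻¹ with hc
    have hcpos : 0 < c := inv_pos.mpr him
    let f : T → 𝔥 := fun p => A (p : 𝔥 × 𝔥)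
    have hf_uc : UniformContinuous f := (A.comp T.subtypeL).uniformContinuous
    have hanti : AntilipschitzWith (Real.toNNReal (max c (c * ‖l‖ + 1))) f := by
      rw [antilipschitzWith_iff_le_mul_dist]
      intro x y
      have hxy : ((x : 𝔥 × 𝔥) - (y : 𝔥 × 𝔥)) ∈ T := sub_mem x.2 y.2
      set Δ : 𝔥 × 𝔥 := (x : 𝔥 × 𝔥) - (y : 𝔥 × 𝔥) with hΔ
      have hd1 : dist x y = ‖Δ‖ := by
        rw [Subtype.dist_eq, dist_eq_norm]
      have hd2 : dist (f x) (f y) = ‖A Δ‖ := by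
        rw [dist_eq_norm, hΔ, map_sub]
      have h1 : ‖Δ.1‖ ≤ c * ‖A Δ‖ := by
        have hh := hest Δ hxy
        rw [hc, inv_mul_eq_div, le_div_iff₀ him, mul_comm]
        exact hh
      have h2 : ‖Δ.2‖ ≤ (c * ‖l‖ + 1) * ‖A Δ‖ := by
        have : Δ.2 = A Δ + l • Δ.1 := by rw [hA]; abel
        calc ‖Δ.2‖ = ‖A Δ + l • Δ.1‖ := by rw [this]
        _ ≤ ‖A Δ‖ + ‖l‖ * ‖Δ.1‖ := by
          refine (norm_add_le _ _).trans ?_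
          rw [norm_smul]
        _ ≤ ‖A Δ‖ + ‖l‖ * (c * ‖A Δ‖) := by
          have := mul_le_mul_of_nonneg_left h1 (norm_nonneg l)
          linarith
        _ = (c * ‖l‖ + 1) * ‖A Δ‖ := by ring
      have hKnn : (0:ℝ) ≤ max c (c * ‖l‖ + 1) := le_max_of_le_left hcpos.le
      rw [hd1, hd2, Real.coe_toNNReal _ hKnn, Prod.norm_def]
      have hAnn : (0:ℝ) ≤ ‖A Δ‖ := norm_nonneg _
      apply max_le
      · exact h1.trans (mul_le_mul_of_nonneg_right (le_max_left _ _) hAnn)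
      · exact h2.trans (mul_le_mul_of_nonneg_right (le_max_right _ _) hAnn)
    have hSclosed : IsClosed (S : Set 𝔥) := by
      have hrange : Set.range f = (S : Set 𝔥) := by
        ext x
        constructor
        · rintro ⟨p, rfl⟩
          exact ⟨(p : 𝔥 × 𝔥), p.2, rfl⟩
        · rintro ⟨p, hp, rfl⟩
          exact ⟨⟨p, hp⟩, rfl⟩
      rw [← hrange]
      exact hanti.isClosed_range hf_uc
    haveI : CompleteSpace S := hSclosed.completeSpace_coe
    -- S has trivial orthogonal complement
    have horth : Sᗮ = ⊥ := by
      rw [Submodule.eq_bot_iff]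
      intro x hx
      refine hdef (starRingEnd ℂ l) (by simpa using neg_pos.mpr hl) x ?_
      rw [mem_adjRel_iff]
      intro q hq
      have hmem : q.2 - l • q.1 ∈ S := ⟨q, hq, rfl⟩
      have h0 : ⟪q.2 - l • q.1, x⟫ = 0 := (Submodule.mem_orthogonal S x).mp hx _ hmem
      rw [inner_sub_left, inner_smul_left, sub_eq_zero] at h0
      have h1 : ⟪x, q.2⟫ = l * ⟪x, q.1⟫ := by
        have := congrArg (starRingEnd ℂ) h0
        simpa [inner_conj_symm, map_mul] using this
      show ⟪(starRingEnd ℂ l) • x, q.1⟫ = ⟪x, q.2⟫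
      rw [inner_smul_left, h1]
      simp
    have hStop : S = ⊤ := Submodule.orthogonal_eq_bot_iff.mp horth
    -- get a preimage in T
    have hhS : h ∈ S := hStop ▸ Submodule.mem_top
    obtain ⟨p, hp, hph⟩ := hhS
    have hph' : p.2 - l • p.1 = h := hph
    have hpT : ((p.1, h + l • p.1) : 𝔥 × 𝔥) ∈ T := by
      have : h + l • p.1 = p.2 := by rw [← hph']; abel
      rw [this]
      exact hp
    -- compare with the exit-space solution
    obtain ⟨u, hu, hRu⟩ := hR l hlne h
    have hext' : ((ι p.1, ι h + l • ι p.1) : 𝔥' × 𝔥') ∈ Ttil := by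
      have := hext _ hpT
      simpa [map_add, map_smul] using this
    have hv : ((u - ι p.1, l • (u - ι p.1)) : 𝔥' × 𝔥') ∈ Ttil := by
      have := Ttil.sub_mem hu hext'
      have heq : ((u, ι h + l • u) : 𝔥' × 𝔥') - (ι p.1, ι h + l • ι p.1)
          = (u - ι p.1, l • (u - ι p.1)) := by
        ext <;> simp [smul_sub]
      rwa [heq] at this
    have hv0 : u - ι p.1 = 0 := by
      set v : 𝔥' := u - ι p.1 with hvdef
      have hmem : ((v, l • v) : 𝔥' × 𝔥') ∈ adjRel Ttil := hsa ▸ hv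
      have := hmem _ hv
      rw [inner_smul_left, inner_smul_right] at this
      have hinner : (⟪v, v⟫ : ℂ) = 0 := by
        by_contra hne
        have : (starRingEnd ℂ) l = l := mul_right_cancel₀ hne this
        exact hlne (Complex.conj_eq_iff_im.mp this)
      simpa using inner_self_eq_zero.mp hinner
    have hui : u = ι p.1 := by rwa [sub_eq_zero] at hv0
    have hRf : R l h = p.1 := by
      rw [hRu, hui]
      refine ext_inner_right ℂ (fun v => ?_)
      rw [hadj, ι.inner_map_map]
    rw [hRf]
    exact hpT
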